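/- Assume conditions (1.2) and (2.1), let u, v be a principal fundamental system of solutions of (r z')' = q z with ρ = u·v, assume ∫_{-∞}^0 dt/(r(t)ρ(t)) = ∫_0^∞ dt/(r(t)ρ(t)) = ∞, and for each x ∈ ℝ let s(x) be the unique positive solution of ∫_{x-s(x)}^{x+s(x)} dt/(r(t) ρ(t)) = 1. Then for every x ∈ ℝ and every t with |t − x| ≤ s(x): e⁻¹ v(x) ≤ v(t) ≤ e v(x), e⁻¹ u(x) ≤ u(t) ≤ e u(x), and e⁻² ρ(x) ≤ ρ(t) ≤ e² ρ(x). -/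

import Mathlib

open MeasureTheory Filter Topology
open scoped ENNReal RealInnerProductSpace

noncomputable section

/-- Conditions (1.2): `r, q` measurable, `r > 0`, `q ≥ 0`, with `1/r` and `q`
locally Lebesgue integrable on `ℝ`. -/
def Cond12 (r q : ℝ → ℝ) : Prop :=
  Measurable r ∧ Measurable q ∧ (∀ x, 0 < r x) ∧ (∀ x, 0 ≤ q x) ∧
    LocallyIntegrable (fun t => 1 / r t) volume ∧ LocallyIntegrable q volume

/-- Condition (1.3): for every `x`,
`(∫_{x-d}^x dt/r(t)) · (∫_{x-d}^x q(t) dt) → ∞` as `|d| → ∞`. -/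
def Cond13 (r q : ℝ → ℝ) : Prop :=
  ∀ x : ℝ, Tendsto (fun d : ℝ => (∫ t in x - d..x, 1 / r t) * (∫ t in x - d..x, q t))
    (cocompact ℝ) atTop

/-- Condition (2.1): `∫_{-∞}^x q > 0` and `∫_x^∞ q > 0` for every `x`. -/
def Cond21 (q : ℝ → ℝ) : Prop :=
  ∀ x : ℝ, 0 < ∫⁻ t in Set.Iic x, ENNReal.ofReal (q t) ∧
    0 < ∫⁻ t in Set.Ici x, ENNReal.ofReal (q t)

/-- A principal fundamental system of solutions `u, v` (with a.e. derivatives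
`u', v'`) of the equation `(r z')' = q z`:  `u, v, r u', r v'` are locally
absolutely continuous (expressed through the integral identities below),
`(r u')' = q u` and `(r v')' = q v` a.e., `u > 0`, `v > 0`, `v' ≥ 0`, `u' ≤ 0`,
`r (v' u - u' v) ≡ 1`, `v/u → 0` at `-∞`, `u/v → 0` at `+∞`,
`∫_{-∞}^0 dt/(r u²) < ∞` and `∫_0^∞ dt/(r v²) < ∞`. -/
structure PFSS (r q u v u' v' : ℝ → ℝ) : Prop where
  u_pos : ∀ x, 0 < u x
  v_pos : ∀ x, 0 < v x
  u'_nonpos : ∀ x, u' x ≤ 0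
  v'_nonneg : ∀ x, 0 ≤ v' x
  u'_intble : ∀ a b : ℝ, IntervalIntegrable u' volume a b
  v'_intble : ∀ a b : ℝ, IntervalIntegrable v' volume a b
  u_deriv : ∀ a b : ℝ, u b - u a = ∫ t in a..b, u' t
  v_deriv : ∀ a b : ℝ, v b - v a = ∫ t in a..b, v' t
  ru'_deriv : ∀ a b : ℝ, r b * u' b - r a * u' a = ∫ t in a..b, q t * u t
  rv'_deriv : ∀ a b : ℝ, r b * v' b - r a * v' a = ∫ t in a..b, q t * v t
  wronskian : ∀ x, r x * (v' x * u x - u' x * v x) = 1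
  ratio_bot : Tendsto (fun x => v x / u x) atBot (𝓝 0)
  ratio_top : Tendsto (fun x => u x / v x) atTop (𝓝 0)
  int_u : ∫⁻ t in Set.Iic (0:ℝ), ENNReal.ofReal (1 / (r t * u t ^ 2)) < ⊤
  int_v : ∫⁻ t in Set.Ici (0:ℝ), ENNReal.ofReal (1 / (r t * v t ^ 2)) < ⊤

/-- The Green kernel `G(x,t) = u(x) v(t)` for `x ≥ t`, `u(t) v(x)` for `x ≤ t`. -/
def greenKernel (u v : ℝ → ℝ) (x t : ℝ) : ℝ :=
  if t ≤ x then u x * v t else u t * v x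

/-- The space `L_p(ℝ)` (with respect to Lebesgue measure). -/
abbrev LpR (p : ℝ≥0∞) : Type := Lp ℝ p (volume : Measure ℝ)

/-- `G` is (a bounded realization on `L_p` of) the Green operator
`(G f)(x) = ∫_ℝ G(x,t) f(t) dt`. -/
def IsGreenOp (u v : ℝ → ℝ) (p : ℝ≥0∞) [Fact (1 ≤ p)]
    (G : LpR p →L[ℝ] LpR p) : Prop :=
  ∀ f : LpR p,
    (G f : ℝ → ℝ) =ᵐ[volume] fun x => ∫ t, greenKernel u v x t * (f : ℝ → ℝ) t

/-- `d₁` solves `(∫_{x-d}^x dt/r)(∫_{x-d}^x q dt) = 1`, `d₁ > 0`. -/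
def IsD1 (r q d₁ : ℝ → ℝ) : Prop :=
  ∀ x : ℝ, 0 < d₁ x ∧
    (∫ t in x - d₁ x..x, 1 / r t) * (∫ t in x - d₁ x..x, q t) = 1

/-- `d₂` solves `(∫_x^{x+d} dt/r)(∫_x^{x+d} q dt) = 1`, `d₂ > 0`. -/
def IsD2 (r q d₂ : ℝ → ℝ) : Prop :=
  ∀ x : ℝ, 0 < d₂ x ∧
    (∫ t in x..x + d₂ x, 1 / r t) * (∫ t in x..x + d₂ x, q t) = 1

/-- `φ(x) = ∫_{x-d₁(x)}^x dt/r(t)`. -/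
def phiF (r d₁ : ℝ → ℝ) (x : ℝ) : ℝ := ∫ t in x - d₁ x..x, 1 / r t

/-- `ψ(x) = ∫_x^{x+d₂(x)} dt/r(t)`. -/
def psiF (r d₂ : ℝ → ℝ) (x : ℝ) : ℝ := ∫ t in x..x + d₂ x, 1 / r t

/-- `h(x) = φ(x)ψ(x)/(φ(x)+ψ(x))`. -/
def hF (r d₁ d₂ : ℝ → ℝ) (x : ℝ) : ℝ :=
  phiF r d₁ x * psiF r d₂ x / (phiF r d₁ x + psiF r d₂ x)

/-- `d` solves `∫_{x-d(x)}^{x+d(x)} dt/(r(t)h(t)) = 1`, `d > 0`. -/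
def IsD (r h d : ℝ → ℝ) : Prop :=
  ∀ x : ℝ, 0 < d x ∧ (∫ t in x - d x..x + d x, 1 / (r t * h t)) = 1

/-- `s` solves `∫_{x-s(x)}^{x+s(x)} dt/(r(t)ρ(t)) = 1`, `s > 0`. -/
def IsS (r ρ s : ℝ → ℝ) : Prop :=
  ∀ x : ℝ, 0 < s x ∧ (∫ t in x - s x..x + s x, 1 / (r t * ρ t)) = 1


namespace UVAux

lemma cont_of_deriv (f f' : ℝ → ℝ)
    (hint : ∀ a b : ℝ, IntervalIntegrable f' volume a b)
    (hder : ∀ a b : ℝ, f b - f a = ∫ t in a..b, f' t) : Continuous f := by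
  have h : f = fun x => f 0 + ∫ t in (0:ℝ)..x, f' t := by
    funext x
    have := hder 0 x
    linarith
  rw [h]
  exact continuous_const.add (intervalIntegral.continuous_primitive hint 0)

lemma w_intble (f w : ℝ → ℝ) (hf : Continuous f) (hpos : ∀ x, 0 < f x)
    (hint : ∀ a b : ℝ, IntervalIntegrable w volume a b) (a b : ℝ) :
    IntervalIntegrable (fun t => w t / f t) volume a b := by
  have h : (fun t => w t / f t) = fun t => w t * (f t)⁻¹ := by
    funext t; rw [div_eq_mul_inv]
  rw [h]
  exact (hint a b).mul_continuousOn
    (hf.continuousOn.inv₀ fun x _ => (hpos x).ne')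

/-- single step, increasing case -/
lemma inc_step (f f' : ℝ → ℝ) (hpos : ∀ x, 0 < f x) (h' : ∀ x, 0 ≤ f' x)
    (hint : ∀ a b : ℝ, IntervalIntegrable f' volume a b)
    (hder : ∀ a b : ℝ, f b - f a = ∫ t in a..b, f' t)
    {a b : ℝ} (hab : a ≤ b) :
    f b * (1 - ∫ t in a..b, f' t / f t) ≤ f a := by
  have hf : Continuous f := cont_of_deriv f f' hint hder
  have hmono : ∀ s t : ℝ, s ≤ t → f s ≤ f t := by
    intro s t hst
    have h1 := hder s t
    have h2 : 0 ≤ ∫ τ in s..t, f' τ :=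
      intervalIntegral.integral_nonneg hst fun τ _ => h' τ
    linarith
  have key : f b - f a ≤ f b * ∫ t in a..b, f' t / f t := by
    have hi1 := hint a b
    have hi2 : IntervalIntegrable (fun t => f b * (f' t / f t)) volume a b := by
      have := (w_intble f f' hf hpos hint a b).const_mul (f b)
      simpa using this
    have hpt : ∀ τ ∈ Set.Icc a b, f' τ ≤ f b * (f' τ / f τ) := by
      intro τ hτ
      have h1 : f' τ / f τ * f τ = f' τ := div_mul_cancel₀ _ (hpos τ).ne'
      have h2 : f' τ / f τ * f τ ≤ f' τ / f τ * f b :=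
        mul_le_mul_of_nonneg_left (hmono τ b hτ.2) (div_nonneg (h' τ) (hpos τ).le)
      rw [h1] at h2; linarith
    calc f b - f a = ∫ t in a..b, f' t := hder a b
      _ ≤ ∫ t in a..b, f b * (f' t / f t) :=
          intervalIntegral.integral_mono_on hab hi1 hi2 hpt
      _ = f b * ∫ t in a..b, f' t / f t := by
          rw [← intervalIntegral.integral_const_mul]
  nlinarith [key]

/-- iterated step, increasing case -/
lemma inc_pow (f f' : ℝ → ℝ) (hpos : ∀ x, 0 < f x) (h' : ∀ x, 0 ≤ f' x)
    (hint : ∀ a b : ℝ, IntervalIntegrable f' volume a b)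
    (hder : ∀ a b : ℝ, f b - f a = ∫ t in a..b, f' t) :
    ∀ n : ℕ, ∀ c : ℝ, 0 ≤ c → c < 1 → ∀ a b : ℝ, a ≤ b →
      (∫ t in a..b, f' t / f t) = n * c → f b ≤ f a / (1 - c) ^ n := by
  have hf : Continuous f := cont_of_deriv f f' hint hder
  have hw : ∀ a b : ℝ, IntervalIntegrable (fun t => f' t / f t) volume a b :=
    w_intble f f' hf hpos hint
  intro n
  induction n with
  | zero =>
      intro c hc hc1 a b hab hI
      have hstep := inc_step f f' hpos h' hint hder hab
      rw [hI] at hstep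
      simpa using hstep
  | succ n ih =>
      intro c hc hc1 a b hab hI
      have hG : ContinuousOn (fun t => ∫ s in a..t, f' s / f s) (Set.Icc a b) :=
        (intervalIntegral.continuous_primitive hw a).continuousOn
      have hmem : (n * c : ℝ) ∈ Set.Icc ((fun t => ∫ s in a..t, f' s / f s) a)
          ((fun t => ∫ s in a..t, f' s / f s) b) := by
        simp only [intervalIntegral.integral_same]
        constructor
        · positivity
        · rw [hI]; push_cast; nlinarith
      obtain ⟨m, hm, hGm⟩ := intermediate_value_Icc hab hG hmem
      simp only at hGm
      have hsplit : (∫ s in a..m, f' s / f s) + ∫ s in m..b, f' s / f s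
          = (n + 1 : ℕ) * c := by
        rw [intervalIntegral.integral_add_adjacent_intervals (hw a m) (hw m b)]
        exact hI
      have hI2 : (∫ s in m..b, f' s / f s) = c := by
        rw [hGm] at hsplit; push_cast at hsplit ⊢; linarith
      have h1 := ih c hc hc1 a m hm.1 hGm
      have h2 := inc_step f f' hpos h' hint hder hm.2
      rw [hI2] at h2
      have h1c : (0:ℝ) < 1 - c := by linarith
      have h3 : f b ≤ f m / (1 - c) := by
        rw [le_div_iff₀ h1c]; linarith
      calc f b ≤ f m / (1 - c) := h3
        _ ≤ (f a / (1 - c) ^ n) / (1 - c) := by gcongr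
        _ = f a / (1 - c) ^ (n + 1) := by rw [div_div, pow_succ]

/-- Gronwall-type bound, increasing case -/
lemma inc_exp (f f' : ℝ → ℝ) (hpos : ∀ x, 0 < f x) (h' : ∀ x, 0 ≤ f' x)
    (hint : ∀ a b : ℝ, IntervalIntegrable f' volume a b)
    (hder : ∀ a b : ℝ, f b - f a = ∫ t in a..b, f' t)
    {a b : ℝ} (hab : a ≤ b) :
    f b ≤ f a * Real.exp (∫ t in a..b, f' t / f t) := by
  set I := ∫ t in a..b, f' t / f t with hIdef
  have hI0 : 0 ≤ I :=
    intervalIntegral.integral_nonneg hab fun τ _ => div_nonneg (h' τ) (hpos τ).le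
  have hexp : Tendsto (fun n : ℕ => (1 + (-I) / n) ^ n) atTop (𝓝 (Real.exp (-I))) :=
    Real.tendsto_one_add_div_pow_exp (-I)
  have hlim : Tendsto (fun n : ℕ => f a / (1 - I / n) ^ n) atTop
      (𝓝 (f a * Real.exp I)) := by
    have h1 : Tendsto (fun n : ℕ => f a / (1 + (-I) / n) ^ n) atTop
        (𝓝 (f a / Real.exp (-I))) :=
      tendsto_const_nhds.div hexp (Real.exp_ne_zero _)
    have h2 : f a / Real.exp (-I) = f a * Real.exp I := by
      rw [Real.exp_neg, div_eq_mul_inv, inv_inv]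
    rw [h2] at h1
    refine h1.congr fun n => ?_
    ring_nf
  refine ge_of_tendsto hlim ?_
  filter_upwards [eventually_gt_atTop ⌈I⌉₊] with n hn
  have hn0 : (0:ℝ) < n := by
    have : 0 < n := by omega
    exact_mod_cast this
  have hIn : I < n := lt_of_le_of_lt (Nat.le_ceil I) (by exact_mod_cast hn)
  have hc1 : I / n < 1 := (div_lt_one hn0).2 hIn
  exact inc_pow f f' hpos h' hint hder n (I / n) (div_nonneg hI0 hn0.le) hc1 a b hab
    (by field_simp; exact hIdef.symm)

/-- single step, decreasing case -/
lemma dec_step (f f' : ℝ → ℝ) (hpos : ∀ x, 0 < f x) (h' : ∀ x, f' x ≤ 0)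
    (hint : ∀ a b : ℝ, IntervalIntegrable f' volume a b)
    (hder : ∀ a b : ℝ, f b - f a = ∫ t in a..b, f' t)
    {a b : ℝ} (hab : a ≤ b) :
    f a * (1 - ∫ t in a..b, -f' t / f t) ≤ f b := by
  have hf : Continuous f := cont_of_deriv f f' hint hder
  have hanti : ∀ s t : ℝ, s ≤ t → f t ≤ f s := by
    intro s t hst
    have h1 := hder s t
    have h2 : 0 ≤ ∫ τ in s..t, -f' τ :=
      intervalIntegral.integral_nonneg hst fun τ _ => by linarith [h' τ]
    rw [intervalIntegral.integral_neg] at h2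
    linarith
  have hni : ∀ a b : ℝ, IntervalIntegrable (fun t => -f' t) volume a b :=
    fun a b => (hint a b).neg
  have key : f a - f b ≤ f a * ∫ t in a..b, -f' t / f t := by
    have hi1 := hni a b
    have hi2 : IntervalIntegrable (fun t => f a * (-f' t / f t)) volume a b := by
      have := (w_intble f (fun t => -f' t) hf hpos hni a b).const_mul (f a)
      simpa using this
    have hpt : ∀ τ ∈ Set.Icc a b, -f' τ ≤ f a * (-f' τ / f τ) := by
      intro τ hτ
      have h1 : -f' τ / f τ * f τ = -f' τ := div_mul_cancel₀ _ (hpos τ).ne'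
      have h2 : -f' τ / f τ * f τ ≤ -f' τ / f τ * f a :=
        mul_le_mul_of_nonneg_left (hanti a τ hτ.1)
          (div_nonneg (by linarith [h' τ]) (hpos τ).le)
      rw [h1] at h2; linarith
    have hsum : f a - f b = ∫ t in a..b, -f' t := by
      rw [intervalIntegral.integral_neg]
      have := hder a b; linarith
    calc f a - f b = ∫ t in a..b, -f' t := hsum
      _ ≤ ∫ t in a..b, f a * (-f' t / f t) :=
          intervalIntegral.integral_mono_on hab hi1 hi2 hpt
      _ = f a * ∫ t in a..b, -f' t / f t := by
          rw [← intervalIntegral.integral_const_mul]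
  nlinarith [key]

/-- iterated step, decreasing case -/
lemma dec_pow (f f' : ℝ → ℝ) (hpos : ∀ x, 0 < f x) (h' : ∀ x, f' x ≤ 0)
    (hint : ∀ a b : ℝ, IntervalIntegrable f' volume a b)
    (hder : ∀ a b : ℝ, f b - f a = ∫ t in a..b, f' t) :
    ∀ n : ℕ, ∀ c : ℝ, 0 ≤ c → c < 1 → ∀ a b : ℝ, a ≤ b →
      (∫ t in a..b, -f' t / f t) = n * c → f a ≤ f b / (1 - c) ^ n := by
  have hf : Continuous f := cont_of_deriv f f' hint hder
  have hni : ∀ a b : ℝ, IntervalIntegrable (fun t => -f' t) volume a b :=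
    fun a b => (hint a b).neg
  have hw : ∀ a b : ℝ, IntervalIntegrable (fun t => -f' t / f t) volume a b :=
    w_intble f (fun t => -f' t) hf hpos hni
  intro n
  induction n with
  | zero =>
      intro c hc hc1 a b hab hI
      have hstep := dec_step f f' hpos h' hint hder hab
      rw [hI] at hstep
      simpa using hstep
  | succ n ih =>
      intro c hc hc1 a b hab hI
      have hG : ContinuousOn (fun t => ∫ s in a..t, -f' s / f s) (Set.Icc a b) :=
        (intervalIntegral.continuous_primitive hw a).continuousOn
      have hmem : (n * c : ℝ) ∈ Set.Icc ((fun t => ∫ s in a..t, -f' s / f s) a)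
          ((fun t => ∫ s in a..t, -f' s / f s) b) := by
        simp only [intervalIntegral.integral_same]
        constructor
        · positivity
        · rw [hI]; push_cast; nlinarith
      obtain ⟨m, hm, hGm⟩ := intermediate_value_Icc hab hG hmem
      simp only at hGm
      have hsplit : (∫ s in a..m, -f' s / f s) + ∫ s in m..b, -f' s / f s
          = (n + 1 : ℕ) * c := by
        rw [intervalIntegral.integral_add_adjacent_intervals (hw a m) (hw m b)]
        exact hI
      have hI2 : (∫ s in m..b, -f' s / f s) = c := by
        rw [hGm] at hsplit; push_cast at hsplit ⊢; linarith
      have h1 := ih c hc hc1 a m hm.1 hGm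
      have h2 := dec_step f f' hpos h' hint hder hm.2
      rw [hI2] at h2
      have h1c : (0:ℝ) < 1 - c := by linarith
      have h3 : f m ≤ f b / (1 - c) := by
        rw [le_div_iff₀ h1c]; linarith
      have h4 : f a ≤ f m / (1 - c) ^ n := h1
      calc f a ≤ f m / (1 - c) ^ n := h4
        _ ≤ (f b / (1 - c)) / (1 - c) ^ n := by gcongr
        _ = f b / (1 - c) ^ (n + 1) := by rw [div_div, pow_succ]; ring_nf

/-- Gronwall-type bound, decreasing case -/
lemma dec_exp (f f' : ℝ → ℝ) (hpos : ∀ x, 0 < f x) (h' : ∀ x, f' x ≤ 0)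
    (hint : ∀ a b : ℝ, IntervalIntegrable f' volume a b)
    (hder : ∀ a b : ℝ, f b - f a = ∫ t in a..b, f' t)
    {a b : ℝ} (hab : a ≤ b) :
    f a ≤ f b * Real.exp (∫ t in a..b, -f' t / f t) := by
  set I := ∫ t in a..b, -f' t / f t with hIdef
  have hI0 : 0 ≤ I :=
    intervalIntegral.integral_nonneg hab fun τ _ =>
      div_nonneg (by linarith [h' τ]) (hpos τ).le
  have hexp : Tendsto (fun n : ℕ => (1 + (-I) / n) ^ n) atTop (𝓝 (Real.exp (-I))) :=
    Real.tendsto_one_add_div_pow_exp (-I)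
  have hlim : Tendsto (fun n : ℕ => f b / (1 - I / n) ^ n) atTop
      (𝓝 (f b * Real.exp I)) := by
    have h1 : Tendsto (fun n : ℕ => f b / (1 + (-I) / n) ^ n) atTop
        (𝓝 (f b / Real.exp (-I))) :=
      tendsto_const_nhds.div hexp (Real.exp_ne_zero _)
    have h2 : f b / Real.exp (-I) = f b * Real.exp I := by
      rw [Real.exp_neg, div_eq_mul_inv, inv_inv]
    rw [h2] at h1
    refine h1.congr fun n => ?_
    ring_nf
  refine ge_of_tendsto hlim ?_
  filter_upwards [eventually_gt_atTop ⌈I⌉₊] with n hn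
  have hn0 : (0:ℝ) < n := by
    have : 0 < n := by omega
    exact_mod_cast this
  have hIn : I < n := lt_of_le_of_lt (Nat.le_ceil I) (by exact_mod_cast hn)
  have hc1 : I / n < 1 := (div_lt_one hn0).2 hIn
  exact dec_pow f f' hpos h' hint hder n (I / n) (div_nonneg hI0 hn0.le) hc1 a b hab
    (by field_simp; simp only [hIdef, neg_div])

end UVAux

/-- **Lemma 2.17** (for the function `s`).  Assume (1.2), (2.1), let `u, v` be
a principal FSS with `ρ = u·v`, assume
`∫_{-∞}^0 dt/(rρ) = ∫_0^∞ dt/(rρ) = ∞`, and let `s > 0` solve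
`∫_{x-s(x)}^{x+s(x)} dt/(rρ) = 1`.  Then for `|t − x| ≤ s(x)`:
`e⁻¹ v(x) ≤ v(t) ≤ e v(x)`, `e⁻¹ u(x) ≤ u(t) ≤ e u(x)` and
`e⁻² ρ(x) ≤ ρ(t) ≤ e² ρ(x)`. -/
theorem uv_rho_comparable_on_s_interval
    (r q u v u' v' s : ℝ → ℝ)
    (h12 : Cond12 r q) (h21 : Cond21 q) (hfss : PFSS r q u v u' v')
    (hIic : (∫⁻ t in Set.Iic (0:ℝ), ENNReal.ofReal (1 / (r t * (u t * v t)))) = ⊤)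
    (hIci : (∫⁻ t in Set.Ici (0:ℝ), ENNReal.ofReal (1 / (r t * (u t * v t)))) = ⊤)
    (hs : IsS r (fun x => u x * v x) s) :
    ∀ x t : ℝ, |t - x| ≤ s x →
      Real.exp (-1) * v x ≤ v t ∧ v t ≤ Real.exp 1 * v x ∧
      Real.exp (-1) * u x ≤ u t ∧ u t ≤ Real.exp 1 * u x ∧
      Real.exp (-2) * (u x * v x) ≤ u t * v t ∧
        u t * v t ≤ Real.exp 2 * (u x * v x) := by
  obtain ⟨hrm, hqm, hrpos, hqnn, hrint, hqint⟩ := h12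
  have hu := hfss.u_pos
  have hv := hfss.v_pos
  have hvc : Continuous v := UVAux.cont_of_deriv v v' hfss.v'_intble hfss.v_deriv
  have huc : Continuous u := UVAux.cont_of_deriv u u' hfss.u'_intble hfss.u_deriv
  set wv : ℝ → ℝ := fun τ => v' τ / v τ with hwv_def
  set wu : ℝ → ℝ := fun τ => -u' τ / u τ with hwu_def
  have hwv_int : ∀ a b : ℝ, IntervalIntegrable wv volume a b :=
    UVAux.w_intble v v' hvc hv hfss.v'_intble
  have hwu_int : ∀ a b : ℝ, IntervalIntegrable wu volume a b :=
    UVAux.w_intble u (fun τ => -u' τ) huc hu (fun a b => (hfss.u'_intble a b).neg)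
  set g : ℝ → ℝ := fun τ => 1 / (r τ * (u τ * v τ)) with hg_def
  have hg_eq : ∀ τ, g τ = wv τ + wu τ := by
    intro τ
    have hw := hfss.wronskian τ
    have hr := hrpos τ
    have hu' := hu τ
    have hv' := hv τ
    simp only [hg_def, hwv_def, hwu_def]
    field_simp
    linear_combination (-1) * hw
  have hwv_nn : ∀ τ, 0 ≤ wv τ := fun τ =>
    div_nonneg (hfss.v'_nonneg τ) (hv τ).le
  have hwu_nn : ∀ τ, 0 ≤ wu τ := fun τ =>
    div_nonneg (by linarith [hfss.u'_nonpos τ]) (hu τ).le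
  have hg_nn : ∀ τ, 0 ≤ g τ := fun τ => by
    rw [hg_eq τ]; exact add_nonneg (hwv_nn τ) (hwu_nn τ)
  have hg_int : ∀ a b : ℝ, IntervalIntegrable g volume a b := by
    intro a b
    have : g = fun τ => wv τ + wu τ := funext hg_eq
    rw [this]
    exact (hwv_int a b).add (hwu_int a b)
  have hvmono : ∀ a b : ℝ, a ≤ b → v a ≤ v b := by
    intro a b hab
    have h1 := hfss.v_deriv a b
    have h2 : 0 ≤ ∫ τ in a..b, v' τ :=
      intervalIntegral.integral_nonneg hab fun τ _ => hfss.v'_nonneg τ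
    linarith
  have huanti : ∀ a b : ℝ, a ≤ b → u b ≤ u a := by
    intro a b hab
    have h1 := hfss.u_deriv a b
    have h2 : 0 ≤ ∫ τ in a..b, -u' τ :=
      intervalIntegral.integral_nonneg hab fun τ _ => by linarith [hfss.u'_nonpos τ]
    rw [intervalIntegral.integral_neg] at h2
    linarith
  intro x t hst
  obtain ⟨hsx, hsint⟩ := hs x
  have hsint' : (∫ τ in x - s x..x + s x, g τ) = 1 := hsint
  have key : ∀ a b : ℝ, x - s x ≤ a → a ≤ b → b ≤ x + s x →
      v b ≤ Real.exp 1 * v a ∧ u a ≤ Real.exp 1 * u b := by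
    intro a b ha hab hb
    have hIv : (∫ τ in a..b, wv τ) ≤ 1 := by
      calc (∫ τ in a..b, wv τ) ≤ ∫ τ in a..b, g τ := by
            refine intervalIntegral.integral_mono_on hab (hwv_int a b) (hg_int a b) ?_
            intro τ _
            rw [hg_eq τ]
            linarith [hwu_nn τ]
        _ ≤ ∫ τ in x - s x..x + s x, g τ :=
            intervalIntegral.integral_mono_interval ha hab hb
              (Filter.Eventually.of_forall fun τ => hg_nn τ) (hg_int _ _)
        _ = 1 := hsint'
    have hIu : (∫ τ in a..b, wu τ) ≤ 1 := by
      calc (∫ τ in a..b, wu τ) ≤ ∫ τ in a..b, g τ := by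
            refine intervalIntegral.integral_mono_on hab (hwu_int a b) (hg_int a b) ?_
            intro τ _
            rw [hg_eq τ]
            linarith [hwv_nn τ]
        _ ≤ ∫ τ in x - s x..x + s x, g τ :=
            intervalIntegral.integral_mono_interval ha hab hb
              (Filter.Eventually.of_forall fun τ => hg_nn τ) (hg_int _ _)
        _ = 1 := hsint'
    constructor
    · have h1 := UVAux.inc_exp v v' hv hfss.v'_nonneg hfss.v'_intble hfss.v_deriv hab
      have h2 : Real.exp (∫ τ in a..b, v' τ / v τ) ≤ Real.exp 1 :=
        Real.exp_le_exp.2 hIv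
      calc v b ≤ v a * Real.exp (∫ τ in a..b, v' τ / v τ) := h1
        _ ≤ v a * Real.exp 1 := mul_le_mul_of_nonneg_left h2 (hv a).le
        _ = Real.exp 1 * v a := mul_comm _ _
    · have h1 := UVAux.dec_exp u u' hu hfss.u'_nonpos hfss.u'_intble hfss.u_deriv hab
      have h2 : Real.exp (∫ τ in a..b, -u' τ / u τ) ≤ Real.exp 1 :=
        Real.exp_le_exp.2 hIu
      calc u a ≤ u b * Real.exp (∫ τ in a..b, -u' τ / u τ) := h1
        _ ≤ u b * Real.exp 1 := mul_le_mul_of_nonneg_left h2 (hu b).le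
        _ = Real.exp 1 * u b := mul_comm _ _
  have habs := abs_le.1 hst
  have he1 : Real.exp (-1) ≤ 1 := by
    have := Real.exp_le_exp.2 (show (-1:ℝ) ≤ 0 by norm_num)
    rwa [Real.exp_zero] at this
  have hee : Real.exp (-1) * Real.exp 1 = 1 := by
    rw [← Real.exp_add]; norm_num
  -- establish the four scalar bounds
  have hbounds : Real.exp (-1) * v x ≤ v t ∧ v t ≤ Real.exp 1 * v x ∧
      Real.exp (-1) * u x ≤ u t ∧ u t ≤ Real.exp 1 * u x := by
    rcases le_total x t with hxt | htx
    · obtain ⟨hvb, hub⟩ := key x t (by linarith) hxt (by linarith)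
      have hv1 : v x ≤ v t := hvmono x t hxt
      have hu1 : u t ≤ u x := huanti x t hxt
      refine ⟨?_, hvb, ?_, ?_⟩
      · nlinarith [hv x]
      · calc Real.exp (-1) * u x ≤ Real.exp (-1) * (Real.exp 1 * u t) :=
              mul_le_mul_of_nonneg_left hub (Real.exp_pos _).le
          _ = u t := by rw [← mul_assoc, hee, one_mul]
      · nlinarith [hu t]
    · obtain ⟨hvb, hub⟩ := key t x (by linarith) htx (by linarith)
      have hv1 : v t ≤ v x := hvmono t x htx
      have hu1 : u x ≤ u t := huanti t x htx
      refine ⟨?_, ?_, ?_, hub⟩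
      · calc Real.exp (-1) * v x ≤ Real.exp (-1) * (Real.exp 1 * v t) :=
              mul_le_mul_of_nonneg_left hvb (Real.exp_pos _).le
          _ = v t := by rw [← mul_assoc, hee, one_mul]
      · nlinarith [hv t]
      · nlinarith [hu x]
  obtain ⟨h1, h2, h3, h4⟩ := hbounds
  refine ⟨h1, h2, h3, h4, ?_, ?_⟩
  · have em2 : Real.exp (-2) = Real.exp (-1) * Real.exp (-1) := by
      rw [← Real.exp_add]; norm_num
    calc Real.exp (-2) * (u x * v x)
        = (Real.exp (-1) * u x) * (Real.exp (-1) * v x) := by rw [em2]; ring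
      _ ≤ u t * v t := by
          refine mul_le_mul h3 h1 (mul_nonneg (Real.exp_pos _).le (hv x).le) (hu t).le
  · have e2 : Real.exp 2 = Real.exp 1 * Real.exp 1 := by
      rw [← Real.exp_add]; norm_num
    calc u t * v t ≤ (Real.exp 1 * u x) * (Real.exp 1 * v x) :=
          mul_le_mul h4 h2 (hv t).le (mul_nonneg (Real.exp_pos _).le (hu x).le)
      _ = Real.exp 2 * (u x * v x) := by rw [e2]; ring
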